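/- arXiv:1707.03618 — 4 statements merged into one kernel-verified Lean document; each statement's English description precedes it below -/
import Mathlib

section
/- If the concircular curvature tensor C̃ is Ricci pseudosymmetric with function L_S, i.e. S(C̃(X,Y)Z,U) + S(Z,C̃(X,Y)U) = L_S (g(Y,Z)S(X,U) - g(X,Z)S(Y,U) + g(Y,U)S(X,Z) - g(X,U)S(Y,Z)) holds for all X, Y, Z, U ∈ V, then L_S = (α² - ρ) + λ/(n-1) + α/n. -/
theorem stmt0
    {V : Type*} [AddCommGroup V] [Module ℝ V] [FiniteDimensional ℝ V]
    (n : ℕ) (hn : 3 ≤ n) (hdim : Module.finrank ℝ V = n)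
    (g : LinearMap.BilinForm ℝ V)
    (hg_symm : ∀ X Y : V, g X Y = g Y X)
    (hg_nondeg : g.Nondegenerate)
    (ξ : V) (hξ : g ξ ξ = -1)
    (η : V → ℝ) (hη : ∀ X : V, η X = g X ξ)
    (α ρ lam L : ℝ) (hα : α ≠ 0)
    (R : V →ₗ[ℝ] V →ₗ[ℝ] V →ₗ[ℝ] V)
    (hRxi : ∀ X Y : V, R X Y ξ = (α ^ 2 - ρ) • (η Y • X - η X • Y))
    (hRskew : ∀ X Y Z U : V, g (R X Y Z) U = - g (R X Y U) Z)
    (S : V → V → ℝ)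
    (hS : ∀ X Y : V, S X Y = -(α + lam) * g X Y - α * η X * η Y)
    (r : ℝ) (hr : r = -lam * (n : ℝ) - ((n : ℝ) - 1) * α)
    (Ct : V → V → V → V)
    (hCt : ∀ X Y Z : V, Ct X Y Z = R X Y Z
      - (r / ((n : ℝ) * ((n : ℝ) - 1))) • (g Y Z • X - g X Z • Y))
    (hPS : ∀ X Y Z U : V, S (Ct X Y Z) U + S Z (Ct X Y U) =
      L * (g Y Z * S X U - g X Z * S Y U + g Y U * S X Z - g X U * S Y Z))
    : L = (α ^ 2 - ρ) + lam / ((n : ℝ) - 1) + α / (n : ℝ) := by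
  have hn0 : (n : ℝ) ≠ 0 := by
    have : (0:ℝ) < n := by exact_mod_cast Nat.lt_of_lt_of_le (by norm_num) hn
    linarith
  have hn1 : (n : ℝ) - 1 ≠ 0 := by
    have : (3:ℝ) ≤ n := by exact_mod_cast hn
    linarith
  set k : ℝ := r / ((n : ℝ) * ((n : ℝ) - 1)) with hk
  -- find Y ≠ 0 orthogonal to ξ
  obtain ⟨Y, hY0, hYξ⟩ : ∃ Y : V, Y ≠ 0 ∧ g Y ξ = 0 := by
    by_contra h
    push_neg at h
    have hinj : Function.Injective (g.flip ξ) := by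
      intro a b hab
      have hab' : g (a - b) ξ = 0 := by
        simp only [map_sub, LinearMap.sub_apply] at *
        simpa [LinearMap.flip_apply] using sub_eq_zero.mpr hab
      by_contra hne
      exact h (a - b) (sub_ne_zero.mpr hne) hab'
    have hle := LinearMap.finrank_le_finrank_of_injective hinj
    rw [hdim] at hle
    simp [Module.finrank_self] at hle
    omega
  obtain ⟨U, hU⟩ : ∃ U : V, g Y U ≠ 0 := by
    by_contra h
    push_neg at h
    exact hY0 (hg_nondeg.1 Y h)
  have hηξ : η ξ = -1 := by rw [hη, hξ]
  have hηY : η Y = 0 := by rw [hη, hYξ]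
  have hξY : g ξ Y = 0 := by rw [hg_symm]; exact hYξ
  -- Ct ξ Y ξ
  have hCt1 : Ct ξ Y ξ = ((α ^ 2 - ρ) - k) • Y := by
    rw [hCt, hRxi, hηY, hηξ, hYξ, hξ]
    module
  -- g (Ct ξ Y U) ξ
  have hCt2 : g (Ct ξ Y U) ξ = -((α ^ 2 - ρ) - k) * g Y U := by
    rw [hCt]
    have h1 : g (R ξ Y U) ξ = - g (R ξ Y ξ) U := hRskew ξ Y U ξ
    rw [hRxi, hηY, hηξ] at h1
    simp only [map_sub, map_smul, LinearMap.sub_apply, LinearMap.smul_apply,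
      smul_eq_mul] at h1 ⊢
    rw [h1, hξ, hYξ]
    ring
  have hCt2' : g ξ (Ct ξ Y U) = -((α ^ 2 - ρ) - k) * g Y U := by
    rw [hg_symm]; exact hCt2
  have key := hPS ξ Y ξ U
  rw [hCt1] at key
  -- expand all S via hS
  simp only [hS, hηξ, hηY, hξ, hYξ, hξY, hη, hCt2, hCt2', map_smul, LinearMap.smul_apply,
    smul_eq_mul] at key
  -- key is now a scalar equation; η U = g U ξ handled by hη rewrite
  have hgUξ : g U ξ = g ξ U := hg_symm U ξ
  rw [hgUξ] at key
  have hA : L = (α ^ 2 - ρ) - k := by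
    have h2 : (((α ^ 2 - ρ) - k) - L) * (α * g Y U) = 0 := by linear_combination -key
    rcases mul_eq_zero.mp h2 with h3 | h3
    · linarith [sub_eq_zero.mp h3]
    · exact absurd h3 (mul_ne_zero hα hU)
  rw [hA, hk, hr]
  field_simp
  ring
end

section
/- If the concircular curvature tensor C̃ is Ricci pseudosymmetric with function L_S, i.e. S(C̃(X,Y)Z,U) + S(Z,C̃(X,Y)U) = L_S (g(Y,Z)S(X,U) - g(X,Z)S(Y,U) + g(Y,U)S(X,Z) - g(X,U)S(Y,Z)) holds for all X, Y, Z, U ∈ V, then λ < 0 if and only if L_S < α/n + (α² - ρ), λ = 0 if and only if L_S = α/n + (α² - ρ), and λ > 0 if and only if L_S > α/n + (α² - ρ); that is, α/n + (α² - ρ) is the critical value for L_S. -/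
theorem stmt1
    {V : Type*} [AddCommGroup V] [Module ℝ V] [FiniteDimensional ℝ V]
    (n : ℕ) (hn : 3 ≤ n) (hdim : Module.finrank ℝ V = n)
    (g : LinearMap.BilinForm ℝ V)
    (hg_symm : ∀ X Y : V, g X Y = g Y X)
    (hg_nondeg : g.Nondegenerate)
    (ξ : V) (hξ : g ξ ξ = -1)
    (η : V → ℝ) (hη : ∀ X : V, η X = g X ξ)
    (α ρ lam L : ℝ) (hα : α ≠ 0)
    (R : V →ₗ[ℝ] V →ₗ[ℝ] V →ₗ[ℝ] V)
    (hRxi : ∀ X Y : V, R X Y ξ = (α ^ 2 - ρ) • (η Y • X - η X • Y))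
    (hRskew : ∀ X Y Z U : V, g (R X Y Z) U = - g (R X Y U) Z)
    (S : V → V → ℝ)
    (hS : ∀ X Y : V, S X Y = -(α + lam) * g X Y - α * η X * η Y)
    (r : ℝ) (hr : r = -lam * (n : ℝ) - ((n : ℝ) - 1) * α)
    (Ct : V → V → V → V)
    (hCt : ∀ X Y Z : V, Ct X Y Z = R X Y Z
      - (r / ((n : ℝ) * ((n : ℝ) - 1))) • (g Y Z • X - g X Z • Y))
    (hPS : ∀ X Y Z U : V, S (Ct X Y Z) U + S Z (Ct X Y U) =
      L * (g Y Z * S X U - g X Z * S Y U + g Y U * S X Z - g X U * S Y Z))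
    : (lam < 0 ↔ L < α / (n : ℝ) + (α ^ 2 - ρ)) ∧
      (lam = 0 ↔ L = α / (n : ℝ) + (α ^ 2 - ρ)) ∧
      (0 < lam ↔ α / (n : ℝ) + (α ^ 2 - ρ) < L) := by
  have hn0 : (n : ℝ) ≠ 0 := by positivity
  have hn1 : (1 : ℝ) < (n : ℝ) := by exact_mod_cast (by omega : 1 < n)
  have hpos : (0 : ℝ) < (n : ℝ) - 1 := by linarith
  have hξ0 : ξ ≠ 0 := by
    intro h; rw [h] at hξ; simp at hξ
  -- find X not in span ξ
  obtain ⟨X, hX⟩ : ∃ X : V, X ∉ Submodule.span ℝ {ξ} := by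
    by_contra h
    push_neg at h
    have htop : Submodule.span ℝ {ξ} = ⊤ := by
      rw [eq_top_iff]; exact fun v _ => h v
    have h1 : Module.finrank ℝ V = 1 := by
      rw [← finrank_top ℝ V, ← htop, finrank_span_singleton hξ0]
    omega
  set W := X + η X • ξ with hWdef
  have hW0 : W ≠ 0 := by
    intro h
    apply hX
    have : X = (-(η X)) • ξ := by
      rw [neg_smul]
      have := h
      rw [hWdef] at this
      linear_combination (norm := module) this
    rw [this]
    exact Submodule.smul_mem _ _ (Submodule.mem_span_singleton_self ξ)
  obtain ⟨Z, hZ⟩ : ∃ Z : V, g W Z ≠ 0 := by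
    by_contra h
    push_neg at h
    exact hW0 (hg_nondeg.1 W h)
  have hWZ : g X Z + g X ξ * g Z ξ ≠ 0 := by
    intro h
    apply hZ
    rw [hWdef]
    simp only [map_add, map_smul, LinearMap.add_apply, LinearMap.smul_apply, smul_eq_mul, hη]
    rw [hg_symm ξ Z] at *
    linarith [h]
  have h := hPS X ξ Z ξ
  simp only [hCt, hS, hη] at h
  simp only [map_sub, map_smul, map_add, LinearMap.sub_apply, LinearMap.smul_apply,
    LinearMap.add_apply, smul_eq_mul] at h
  rw [hRskew X ξ Z ξ] at h
  rw [hRxi X ξ] at h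
  simp only [map_sub, map_smul, map_add, LinearMap.sub_apply, LinearMap.smul_apply,
    LinearMap.add_apply, smul_eq_mul, hη, hξ] at h
  simp only [hg_symm Z X, hg_symm ξ Z] at h
  have key : (L - (α ^ 2 - ρ - r / ((n : ℝ) * ((n : ℝ) - 1)))) *
      (α * (g X Z + g X ξ * g Z ξ)) = 0 := by
    linear_combination -h
  have hfac : L = α ^ 2 - ρ - r / ((n : ℝ) * ((n : ℝ) - 1)) := by
    rcases mul_eq_zero.mp key with h1 | h2
    · linarith [sub_eq_zero.mp h1]
    · rcases mul_eq_zero.mp h2 with h3 | h4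
      · exact absurd h3 hα
      · exact absurd h4 hWZ
  have hL2 : (L - (α / (n : ℝ) + (α ^ 2 - ρ))) * ((n : ℝ) - 1) = lam := by
    rw [hfac, hr]
    field_simp
    ring
  have e : lam = (L - (α / (n : ℝ) + (α ^ 2 - ρ))) * ((n : ℝ) - 1) := hL2.symm
  refine ⟨⟨fun h' => ?_, fun h' => ?_⟩, ⟨fun h' => ?_, fun h' => ?_⟩, fun h' => ?_, fun h' => ?_⟩
  · by_contra hc
    push_neg at hc
    have h0 : 0 ≤ (L - (α / (n : ℝ) + (α ^ 2 - ρ))) * ((n : ℝ) - 1) :=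
      mul_nonneg (by linarith) (by linarith)
    linarith
  · have h0 : (L - (α / (n : ℝ) + (α ^ 2 - ρ))) * ((n : ℝ) - 1) < 0 :=
      mul_neg_of_neg_of_pos (by linarith) hpos
    linarith
  · have h0 : (L - (α / (n : ℝ) + (α ^ 2 - ρ))) * ((n : ℝ) - 1) = 0 := by linarith
    rcases mul_eq_zero.mp h0 with h1 | h2
    · linarith
    · linarith
  · rw [h', sub_self, zero_mul] at e
    exact e
  · by_contra hc
    push_neg at hc
    have h0 : (L - (α / (n : ℝ) + (α ^ 2 - ρ))) * ((n : ℝ) - 1) ≤ 0 :=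
      mul_nonpos_of_nonpos_of_nonneg (by linarith) (by linarith)
    linarith
  · have h0 : 0 < (L - (α / (n : ℝ) + (α ^ 2 - ρ))) * ((n : ℝ) - 1) :=
      mul_pos (by linarith) hpos
    linarith
end

section
/- For all X, Y, Z, U ∈ V one has S(C̃(X,Y)Z,U) + S(Z,C̃(X,Y)U) = (14/(3z²))·(g(Y,Z)S(X,U) - g(X,Z)S(Y,U) + g(Y,U)S(X,Z) - g(X,U)S(Y,Z)); that is, the example (LCS)₃-structure is concircular Ricci pseudosymmetric with L_S = 14/(3z²). -/
theorem stmt16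
    (z : ℝ) (hz : z ≠ 0)
    (e : Fin 3 → (Fin 3 → ℝ)) (he : ∀ i, e i = Pi.single i 1)
    (g : LinearMap.BilinForm ℝ (Fin 3 → ℝ))
    (hg_symm : ∀ X Y, g X Y = g Y X)
    (hg1 : g (e 0) (e 0) = 1) (hg2 : g (e 1) (e 1) = 1) (hg3 : g (e 2) (e 2) = -1)
    (hg0 : ∀ i j, i ≠ j → g (e i) (e j) = 0)
    (S : LinearMap.BilinForm ℝ (Fin 3 → ℝ))
    (hS_symm : ∀ X Y, S X Y = S Y X)
    (hS1 : S (e 0) (e 0) = -(2 / z ^ 2)) (hS2 : S (e 1) (e 1) = -(2 / z ^ 2))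
    (hS3 : S (e 2) (e 2) = -(12 / z ^ 2))
    (hS0 : ∀ i j, i ≠ j → S (e i) (e j) = 0)
    (R : (Fin 3 → ℝ) →ₗ[ℝ] (Fin 3 → ℝ) →ₗ[ℝ] (Fin 3 → ℝ) →ₗ[ℝ] (Fin 3 → ℝ))
    (hR_anti : ∀ X Y Z, R X Y Z = - R Y X Z)
    (hR121 : R (e 0) (e 1) (e 0) = (-(4 / z ^ 2)) • e 1)
    (hR122 : R (e 0) (e 1) (e 1) = (4 / z ^ 2) • e 0)
    (hR123 : R (e 0) (e 1) (e 2) = 0)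
    (hR131 : R (e 0) (e 2) (e 0) = (-(6 / z ^ 2)) • e 2)
    (hR132 : R (e 0) (e 2) (e 1) = 0)
    (hR133 : R (e 0) (e 2) (e 2) = (-(6 / z ^ 2)) • e 0)
    (hR231 : R (e 1) (e 2) (e 0) = 0)
    (hR232 : R (e 1) (e 2) (e 1) = (-(6 / z ^ 2)) • e 2)
    (hR233 : R (e 1) (e 2) (e 2) = (-(6 / z ^ 2)) • e 1)
    (r : ℝ) (hr : r = 8 / z ^ 2)
    (Ct : (Fin 3 → ℝ) → (Fin 3 → ℝ) → (Fin 3 → ℝ) → (Fin 3 → ℝ))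
    (hCt : ∀ X Y Z, Ct X Y Z = R X Y Z - (r / 6) • (g Y Z • X - g X Z • Y))
    : ∀ X Y Z U : Fin 3 → ℝ,
      S (Ct X Y Z) U + S Z (Ct X Y U) =
        (14 / (3 * z ^ 2)) *
          (g Y Z * S X U - g X Z * S Y U + g Y U * S X Z - g X U * S Y Z) := by
  have hRXX : ∀ X Z, R X X Z = 0 := by
    intro X Z
    have h := hR_anti X X Z
    have h2 : (2:ℝ) • R X X Z = 0 := by rw [two_smul]; nth_rewrite 1 [h]; simp
    simpa using (smul_eq_zero.mp h2).resolve_left (by norm_num)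
  have hR211 : R (e 1) (e 0) (e 0) = -((-(4 / z ^ 2)) • e 1) := by rw [hR_anti, hR121]
  have hR212 : R (e 1) (e 0) (e 1) = -((4 / z ^ 2) • e 0) := by rw [hR_anti, hR122]
  have hR213 : R (e 1) (e 0) (e 2) = -(0 : Fin 3 → ℝ) := by rw [hR_anti, hR123]
  have hR311 : R (e 2) (e 0) (e 0) = -((-(6 / z ^ 2)) • e 2) := by rw [hR_anti, hR131]
  have hR312 : R (e 2) (e 0) (e 1) = -(0 : Fin 3 → ℝ) := by rw [hR_anti, hR132]
  have hR313 : R (e 2) (e 0) (e 2) = -((-(6 / z ^ 2)) • e 0) := by rw [hR_anti, hR133]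
  have hR321 : R (e 2) (e 1) (e 0) = -(0 : Fin 3 → ℝ) := by rw [hR_anti, hR231]
  have hR322 : R (e 2) (e 1) (e 1) = -((-(6 / z ^ 2)) • e 2) := by rw [hR_anti, hR232]
  have hR323 : R (e 2) (e 1) (e 2) = -((-(6 / z ^ 2)) • e 1) := by rw [hR_anti, hR233]
  have hg01 : g (e 0) (e 1) = 0 := hg0 0 1 (by decide)
  have hg02 : g (e 0) (e 2) = 0 := hg0 0 2 (by decide)
  have hg10 : g (e 1) (e 0) = 0 := hg0 1 0 (by decide)
  have hg12 : g (e 1) (e 2) = 0 := hg0 1 2 (by decide)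
  have hg20 : g (e 2) (e 0) = 0 := hg0 2 0 (by decide)
  have hg21 : g (e 2) (e 1) = 0 := hg0 2 1 (by decide)
  have hS01 : S (e 0) (e 1) = 0 := hS0 0 1 (by decide)
  have hS02 : S (e 0) (e 2) = 0 := hS0 0 2 (by decide)
  have hS10 : S (e 1) (e 0) = 0 := hS0 1 0 (by decide)
  have hS12 : S (e 1) (e 2) = 0 := hS0 1 2 (by decide)
  have hS20 : S (e 2) (e 0) = 0 := hS0 2 0 (by decide)
  have hS21 : S (e 2) (e 1) = 0 := hS0 2 1 (by decide)
  have hdec : ∀ v : Fin 3 → ℝ, v = v 0 • e 0 + v 1 • e 1 + v 2 • e 2 := by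
    intro v
    funext j
    fin_cases j <;> simp [he, Pi.single_apply]
  intro X Y Z U
  obtain ⟨a0, a1, a2, rfl⟩ : ∃ p q s, X = p • e 0 + q • e 1 + s • e 2 := ⟨X 0, X 1, X 2, hdec X⟩
  obtain ⟨b0, b1, b2, rfl⟩ : ∃ p q s, Y = p • e 0 + q • e 1 + s • e 2 := ⟨Y 0, Y 1, Y 2, hdec Y⟩
  obtain ⟨c0, c1, c2, rfl⟩ : ∃ p q s, Z = p • e 0 + q • e 1 + s • e 2 := ⟨Z 0, Z 1, Z 2, hdec Z⟩
  obtain ⟨d0, d1, d2, rfl⟩ : ∃ p q s, U = p • e 0 + q • e 1 + s • e 2 := ⟨U 0, U 1, U 2, hdec U⟩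
  simp only [hCt, hr, map_add, map_smul, map_sub, map_neg, LinearMap.add_apply,
    LinearMap.smul_apply, LinearMap.sub_apply, LinearMap.neg_apply, LinearMap.map_smul₂,
    LinearMap.map_add₂, smul_add, smul_sub, smul_smul, smul_neg,
    hRXX, hR121, hR122, hR123, hR131, hR132, hR133, hR231, hR232, hR233,
    hR211, hR212, hR213, hR311, hR312, hR313, hR321, hR322, hR323,
    hg1, hg2, hg3, hg01, hg02, hg10, hg12, hg20, hg21,
    hS1, hS2, hS3, hS01, hS02, hS10, hS12, hS20, hS21,
    smul_eq_mul, map_zero, LinearMap.zero_apply, smul_zero, mul_zero, zero_mul,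
    add_zero, zero_add, neg_zero, mul_neg, neg_neg, mul_one, mul_zero]
  ring
end

section
/- For X = a₁e₁ + b₁e₂ + c₁e₃, Y = a₂e₁ + b₂e₂ + c₂e₃, Z = a₃e₁ + b₃e₂ + c₃e₃, U = a₄e₁ + b₄e₂ + c₄e₃ with arbitrary real coefficients aᵢ, bᵢ, cᵢ, one has g(Y,Z)S(X,U) - g(X,Z)S(Y,U) + g(Y,U)S(X,Z) - g(X,U)S(Y,Z) = (14/z²)·((a₁c₂ - a₂c₁)(a₃c₄ + a₄c₃) + (b₁c₂ - b₂c₁)(b₃c₄ + b₄c₃)). -/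
theorem stmt17
    (z : ℝ) (hz : z ≠ 0)
    (e : Fin 3 → (Fin 3 → ℝ)) (he : ∀ i, e i = Pi.single i 1)
    (g : LinearMap.BilinForm ℝ (Fin 3 → ℝ))
    (hg_symm : ∀ X Y, g X Y = g Y X)
    (hg1 : g (e 0) (e 0) = 1) (hg2 : g (e 1) (e 1) = 1) (hg3 : g (e 2) (e 2) = -1)
    (hg0 : ∀ i j, i ≠ j → g (e i) (e j) = 0)
    (S : LinearMap.BilinForm ℝ (Fin 3 → ℝ))
    (hS_symm : ∀ X Y, S X Y = S Y X)
    (hS1 : S (e 0) (e 0) = -(2 / z ^ 2)) (hS2 : S (e 1) (e 1) = -(2 / z ^ 2))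
    (hS3 : S (e 2) (e 2) = -(12 / z ^ 2))
    (hS0 : ∀ i j, i ≠ j → S (e i) (e j) = 0)
    (a₁ b₁ c₁ a₂ b₂ c₂ a₃ b₃ c₃ a₄ b₄ c₄ : ℝ)
    (X : Fin 3 → ℝ) (hX : X = a₁ • e 0 + b₁ • e 1 + c₁ • e 2)
    (Y : Fin 3 → ℝ) (hY : Y = a₂ • e 0 + b₂ • e 1 + c₂ • e 2)
    (Z : Fin 3 → ℝ) (hZ : Z = a₃ • e 0 + b₃ • e 1 + c₃ • e 2)
    (U : Fin 3 → ℝ) (hU : U = a₄ • e 0 + b₄ • e 1 + c₄ • e 2)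
    : g Y Z * S X U - g X Z * S Y U + g Y U * S X Z - g X U * S Y Z =
        (14 / z ^ 2) *
          ((a₁ * c₂ - a₂ * c₁) * (a₃ * c₄ + a₄ * c₃) +
           (b₁ * c₂ - b₂ * c₁) * (b₃ * c₄ + b₄ * c₃)) := by
  subst hX hY hZ hU
  have h01 := hg0 0 1 (by decide); have h02 := hg0 0 2 (by decide)
  have h10 := hg0 1 0 (by decide); have h12 := hg0 1 2 (by decide)
  have h20 := hg0 2 0 (by decide); have h21 := hg0 2 1 (by decide)
  have s01 := hS0 0 1 (by decide); have s02 := hS0 0 2 (by decide)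
  have s10 := hS0 1 0 (by decide); have s12 := hS0 1 2 (by decide)
  have s20 := hS0 2 0 (by decide); have s21 := hS0 2 1 (by decide)
  simp only [map_add, map_smul, LinearMap.add_apply, LinearMap.smul_apply, smul_eq_mul,
    hg1, hg2, hg3, hS1, hS2, hS3, h01, h02, h10, h12, h20, h21, s01, s02, s10, s12, s20, s21]
  ring
end
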